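/- Let f₁, f₂, …, f_k : GL_n(ℂ) → GL_n(ℂ) be a finite family of self-mappings of the general linear group such that at least one of these mappings is open with respect to the Euclidean topology. Let A₁, A₂, …, A_k be arbitrary matrices in M_n(ℂ) and let ‖·‖ be a norm on M_n(ℂ). Then for every ε > 0 there exists a finite family A_{1ε}, A_{2ε}, …, A_{kε} of invertible matrices with simple spectra such that ‖A_i − A_{iε}‖ < ε for every i = 1,…,k and the product matrix f₁(A_{1ε}) f₂(A_{2ε}) ⋯ f_k(A_{kε}) has a simple spectrum. -/

import Mathlib

open Matrix Polynomial Topology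

noncomputable def discFn (n : ℕ) (A : Matrix (Fin n) (Fin n) ℂ) : ℂ :=
  A.det * (Polynomial.aeval A A.charpoly.derivative).det

private lemma continuous_charpoly_coeff {n : ℕ} (k : ℕ) :
    Continuous fun A : Matrix (Fin n) (Fin n) ℂ => A.charpoly.coeff k := by
  classical
  have key : ∀ A : Matrix (Fin n) (Fin n) ℂ, A.charpoly.coeff k =
      ∑ σ : Equiv.Perm (Fin n), ((Equiv.Perm.sign σ : ℤ) : ℂ) *
        ∑ t ∈ (Finset.univ : Finset (Fin n)).powerset,
          ((∏ i ∈ t, (if σ i = i then (X : ℂ[X]) else 0)).coeff k) *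
            ∏ i ∈ Finset.univ \ t, (-A (σ i) i) := by
    intro A
    rw [Matrix.charpoly, Matrix.det_apply, Polynomial.finset_sum_coeff]
    refine Finset.sum_congr rfl fun σ _ => ?_
    rw [Polynomial.coeff_smul, Units.smul_def, zsmul_eq_mul]
    congr 1
    have h1 : ∀ i : Fin n, charmatrix A (σ i) i
        = (if σ i = i then (X : ℂ[X]) else 0) + C (-A (σ i) i) := by
      intro i
      by_cases h : σ i = i
      · rw [if_pos h, h, charmatrix_apply_eq, map_neg, sub_eq_add_neg]
      · rw [if_neg h, charmatrix_apply_ne _ _ _ h, map_neg, zero_add]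
    rw [Finset.prod_congr rfl fun i _ => h1 i, Finset.prod_add, Polynomial.finset_sum_coeff]
    refine Finset.sum_congr rfl fun t _ => ?_
    rw [← map_prod, Polynomial.coeff_mul_C]
  rw [show (fun A : Matrix (Fin n) (Fin n) ℂ => A.charpoly.coeff k) = _ from funext key]
  refine continuous_finset_sum _ fun σ _ => continuous_const.mul
    (continuous_finset_sum _ fun t _ => continuous_const.mul
      (continuous_finset_prod _ fun i _ => ?_))
  exact (continuous_id.matrix_elem _ _).neg

private lemma continuous_discFn {n : ℕ} (hn : 0 < n) : Continuous (discFn n) := by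
  have hpow : ∀ m : ℕ, Continuous fun A : Matrix (Fin n) (Fin n) ℂ => A ^ m := by
    intro m; induction m with
    | zero => simpa [pow_zero] using (continuous_const : Continuous fun _ : Matrix (Fin n) (Fin n) ℂ => (1 : Matrix (Fin n) (Fin n) ℂ))
    | succ m ih => simpa [pow_succ] using ih.matrix_mul continuous_id
  have hc : ∀ i : ℕ, Continuous fun A : Matrix (Fin n) (Fin n) ℂ => A.charpoly.derivative.coeff i := by
    intro i
    simp only [Polynomial.coeff_derivative]
    exact (continuous_charpoly_coeff (i + 1)).mul continuous_const
  have key : ∀ A : Matrix (Fin n) (Fin n) ℂ,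
      (Polynomial.aeval A A.charpoly.derivative : Matrix (Fin n) (Fin n) ℂ)
        = ∑ i ∈ Finset.range n, A.charpoly.derivative.coeff i • A ^ i := by
    intro A
    have hdeg : A.charpoly.derivative.natDegree < n := by
      have h1 : A.charpoly.derivative.natDegree ≤ A.charpoly.natDegree - 1 :=
        Polynomial.natDegree_derivative_le _
      rw [Matrix.charpoly_natDegree_eq_dim, Fintype.card_fin] at h1
      omega
    exact Polynomial.aeval_eq_sum_range' hdeg A
  have h2 : Continuous fun A : Matrix (Fin n) (Fin n) ℂ =>
      (Polynomial.aeval A A.charpoly.derivative : Matrix (Fin n) (Fin n) ℂ) := by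
    rw [show (fun A : Matrix (Fin n) (Fin n) ℂ =>
      (Polynomial.aeval A A.charpoly.derivative : Matrix (Fin n) (Fin n) ℂ)) = _ from funext key]
    exact continuous_finset_sum _ fun i _ => (hc i).smul (hpow i)
  exact continuous_id.matrix_det.mul h2.matrix_det

private lemma det_aeval_deriv_ne_zero_iff {n : ℕ} (A : Matrix (Fin n) (Fin n) ℂ) :
    (Polynomial.aeval A A.charpoly.derivative).det ≠ 0 ↔ A.charpoly.roots.Nodup := by
  have hmonic := A.charpoly_monic
  have hp0 : A.charpoly ≠ 0 := hmonic.ne_zero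
  have hsplits : A.charpoly.Splits := IsAlgClosed.splits _
  constructor
  · intro hdet
    by_contra hnd
    rw [Multiset.nodup_iff_count_le_one] at hnd
    push_neg at hnd
    obtain ⟨r, hr⟩ := hnd
    have hr2 : 2 ≤ A.charpoly.rootMultiplicity r := by
      rw [← Polynomial.count_roots]; omega
    have hdvd : (X - C r) ^ 2 ∣ A.charpoly :=
      dvd_trans (pow_dvd_pow _ hr2) (Polynomial.pow_rootMultiplicity_dvd _ r)
    obtain ⟨q, hq⟩ := hdvd
    have hderiv : A.charpoly.derivative.eval r = 0 := by
      rw [hq]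
      simp [Polynomial.derivative_mul, Polynomial.derivative_pow]
    have hroot : A.charpoly.eval r = 0 := by rw [hq]; simp
    have hdet0 : (r • (1 : Matrix (Fin n) (Fin n) ℂ) - A).det = 0 := by
      have h2 : (charmatrix A).map (Polynomial.evalRingHom r)
          = r • (1 : Matrix (Fin n) (Fin n) ℂ) - A := by
        ext i j
        by_cases h : i = j
        · subst h
          simp [charmatrix_apply_eq, Matrix.one_apply]
        · simp [charmatrix_apply_ne _ _ _ h, Matrix.one_apply_ne h]
      rw [← h2, ← RingHom.mapMatrix_apply, ← RingHom.map_det]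
      simpa [Matrix.charpoly] using hroot
    obtain ⟨v, hv0, hv⟩ := Matrix.exists_mulVec_eq_zero_iff.mpr hdet0
    have hAv : A *ᵥ v = r • v := by
      rw [Matrix.sub_mulVec, sub_eq_zero] at hv
      rw [← hv, Matrix.smul_mulVec, Matrix.one_mulVec]
    have hpowv : ∀ m : ℕ, (A ^ m) *ᵥ v = r ^ m • v := by
      intro m; induction m with
      | zero => simp [Matrix.one_mulVec]
      | succ m ih =>
        rw [pow_succ', ← Matrix.mulVec_mulVec, ih, Matrix.mulVec_smul, hAv, smul_smul,
          ← pow_succ]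
    have haeval : ∀ q : ℂ[X], (Polynomial.aeval A q) *ᵥ v = q.eval r • v := by
      intro q
      induction q using Polynomial.induction_on' with
      | add p₁ p₂ h₁ h₂ =>
        rw [map_add, Matrix.add_mulVec, h₁, h₂, Polynomial.eval_add, add_smul]
      | monomial m c =>
        rw [Polynomial.aeval_monomial, Polynomial.eval_monomial, ← Matrix.mulVec_mulVec,
          hpowv, Matrix.mulVec_smul, Algebra.algebraMap_eq_smul_one, Matrix.smul_mulVec,
          Matrix.one_mulVec, smul_smul, mul_comm c (r ^ m)]
    have hzero : (Polynomial.aeval A A.charpoly.derivative) *ᵥ v = 0 := by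
      rw [haeval, hderiv, zero_smul]
    exact hdet (Matrix.exists_mulVec_eq_zero_iff.mp ⟨v, hv0, hzero⟩)
  · intro hnd
    have hsep : A.charpoly.Separable :=
      (Polynomial.nodup_roots_iff_of_splits hp0 hsplits).mp hnd
    obtain ⟨a, b, hab⟩ := hsep
    have h1 : Polynomial.aeval A b * Polynomial.aeval A A.charpoly.derivative = 1 := by
      have := congrArg (Polynomial.aeval A) hab
      rwa [map_add, _root_.map_mul, _root_.map_mul, Matrix.aeval_self_charpoly, mul_zero, zero_add,
        _root_.map_one] at this
    have h2 : Polynomial.aeval A A.charpoly.derivative * Polynomial.aeval A b = 1 := by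
      rw [← _root_.map_mul, mul_comm, _root_.map_mul]
      exact h1
    have hunit : IsUnit (Polynomial.aeval A A.charpoly.derivative) :=
      ⟨⟨_, Polynomial.aeval A b, h2, h1⟩, rfl⟩
    exact ((Matrix.isUnit_iff_isUnit_det _).mp hunit).ne_zero

private lemma discFn_ne_iff {n : ℕ} (A : Matrix (Fin n) (Fin n) ℂ) :
    discFn n A ≠ 0 ↔ A.det ≠ 0 ∧ A.charpoly.roots.Nodup := by
  rw [discFn, mul_ne_zero_iff, det_aeval_deriv_ne_zero_iff]

private lemma discFn_diag_ne {n : ℕ} :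
    discFn n (Matrix.diagonal (fun i : Fin n => ((i.val + 1 : ℕ) : ℂ))) ≠ 0 := by
  classical
  set d : Fin n → ℂ := fun i => ((i.val + 1 : ℕ) : ℂ) with hd
  have hdinj : Function.Injective d := by
    intro i j hij
    have : i.val + 1 = j.val + 1 := Nat.cast_injective hij
    exact Fin.val_injective (by omega)
  have hcm : charmatrix (Matrix.diagonal d)
      = Matrix.diagonal (fun i => (X : ℂ[X]) - C (d i)) := by
    ext i j
    by_cases h : i = j
    · subst h; simp
    · simp [charmatrix_apply_ne _ _ _ h, Matrix.diagonal_apply_ne _ h,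
        Matrix.diagonal_apply_ne' _ h]
  have hcp : (Matrix.diagonal d).charpoly = ∏ i : Fin n, ((X : ℂ[X]) - C (d i)) := by
    rw [Matrix.charpoly, hcm, Matrix.det_diagonal]
  have hroots : (Matrix.diagonal d).charpoly.roots = Finset.univ.val.map d := by
    rw [hcp]
    have h1 : (∏ i : Fin n, ((X : ℂ[X]) - C (d i)))
        = ((Finset.univ.val.map d).map fun a => (X : ℂ[X]) - C a).prod := by
      rw [Multiset.map_map]
      rfl
    rw [h1, Polynomial.roots_multiset_prod_X_sub_C]
  have hnodup : (Matrix.diagonal d).charpoly.roots.Nodup := by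
    rw [hroots]
    exact Finset.univ.nodup.map hdinj
  have hdet : (Matrix.diagonal d).det ≠ 0 := by
    rw [Matrix.det_diagonal]
    refine Finset.prod_ne_zero_iff.mpr fun i _ => ?_
    exact_mod_cast Nat.cast_ne_zero.mpr (Nat.succ_ne_zero i.val)
  exact (discFn_ne_iff _).mpr ⟨hdet, hnodup⟩

private lemma dense_discFn {n : ℕ} :
    Dense {M : Matrix (Fin n) (Fin n) ℂ | discFn n M ≠ 0} := by
  classical
  rw [dense_iff_inter_open]
  rintro U hU ⟨A, hA⟩
  set D : Matrix (Fin n) (Fin n) ℂ :=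
    Matrix.diagonal (fun i : Fin n => ((i.val + 1 : ℕ) : ℂ)) with hD
  set M : Matrix (Fin n) (Fin n) (Polynomial ℂ) :=
    A.map Polynomial.C + (Polynomial.X : ℂ[X]) • ((D - A).map Polynomial.C) with hM
  have hmap : ∀ t : ℂ, M.map (Polynomial.evalRingHom t) = A + t • (D - A) := by
    intro t
    ext i j
    simp [hM, Matrix.map_apply, Matrix.add_apply, Matrix.smul_apply, smul_eq_mul]
  set δ : ℂ[X] := M.det * (Polynomial.aeval M M.charpoly.derivative).det with hδ
  have heval : ∀ t : ℂ, δ.eval t = discFn n (A + t • (D - A)) := by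
    intro t
    have hcomp : (algebraMap ℂ (Matrix (Fin n) (Fin n) ℂ)).comp (Polynomial.evalRingHom t)
        = (RingHom.mapMatrix (Polynomial.evalRingHom t)).comp
            (algebraMap (Polynomial ℂ) (Matrix (Fin n) (Fin n) (Polynomial ℂ))) := by
      refine RingHom.ext fun p => ?_
      ext i j
      simp [Matrix.algebraMap_matrix_apply, RingHom.mapMatrix_apply, Matrix.map_apply,
        apply_ite (Polynomial.eval t)]
    have f1 : Polynomial.eval t M.det = (A + t • (D - A)).det := by
      rw [show Polynomial.eval t M.det = (Polynomial.evalRingHom t) M.det from rfl,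
        RingHom.map_det, RingHom.mapMatrix_apply, hmap t]
    have f2 : Polynomial.eval t (Polynomial.aeval M M.charpoly.derivative).det
        = (Polynomial.aeval (A + t • (D - A))
            ((A + t • (D - A)).charpoly.derivative)).det := by
      rw [show Polynomial.eval t _ = (Polynomial.evalRingHom t)
            (Polynomial.aeval M M.charpoly.derivative).det from rfl,
        RingHom.map_det]
      congr 1
      rw [Polynomial.map_aeval_eq_aeval_map hcomp]
      rw [RingHom.mapMatrix_apply, hmap t]
      congr 1
      rw [← hmap t, Matrix.charpoly_map, Polynomial.derivative_map]
    rw [hδ, Polynomial.eval_mul, f1, f2, discFn]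
  have hδ1 : δ.eval 1 ≠ 0 := by
    rw [heval 1, one_smul, add_sub_cancel]
    exact discFn_diag_ne
  have hδne : δ ≠ 0 := fun h => hδ1 (by rw [h, Polynomial.eval_zero])
  have hLcont : Continuous fun t : ℂ => A + t • (D - A) :=
    continuous_const.add (continuous_id.smul continuous_const)
  obtain ⟨ρ, hρpos, hball⟩ := Metric.isOpen_iff.mp (hLcont.isOpen_preimage U hU) 0
    (by simpa using hA)
  have hex : ∃ m : ℕ, ¬ δ.IsRoot ((ρ / (m + 2) : ℝ) : ℂ) := by
    by_contra hall
    push_neg at hall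
    refine (δ.roots.finite_toSet).not_infinite
      (Set.infinite_of_injective_forall_mem
        (f := fun m : ℕ => ((ρ / (m + 2) : ℝ) : ℂ)) ?_ ?_)
    · intro a b hab
      have h1 : (ρ / ((a : ℝ) + 2) : ℝ) = ρ / ((b : ℝ) + 2) := by
        dsimp only at hab
        exact_mod_cast hab
      have ha2 : ((a : ℝ) + 2) ≠ 0 := by positivity
      have hb2 : ((b : ℝ) + 2) ≠ 0 := by positivity
      rw [div_eq_div_iff ha2 hb2] at h1
      have h2 : ((a : ℝ) + 2) = (b : ℝ) + 2 := by
        have := mul_left_cancel₀ hρpos.ne' (by linarith : ρ * ((a : ℝ) + 2) = ρ * ((b : ℝ) + 2))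
        linarith
      exact_mod_cast (by linarith : (a : ℝ) = b)
    · intro m
      exact Multiset.mem_toFinset.mp (Multiset.mem_toFinset.mpr
        (Polynomial.mem_roots'.mpr ⟨hδne, hall m⟩))
  obtain ⟨m, hm⟩ := hex
  set t : ℂ := ((ρ / (m + 2) : ℝ) : ℂ) with ht
  have htball : t ∈ Metric.ball (0 : ℂ) ρ := by
    rw [Metric.mem_ball, dist_zero_right, ht, Complex.norm_real, Real.norm_eq_abs,
      abs_of_pos (by positivity)]
    rw [div_lt_iff₀ (by positivity)]
    nlinarith [Nat.cast_nonneg (α := ℝ) m, hρpos]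
  refine ⟨A + t • (D - A), hball htball, ?_⟩
  rw [Set.mem_setOf_eq, ← heval t]
  exact hm

private lemma continuous_seminorm_matrix {n : ℕ}
    (nrm : Seminorm ℂ (Matrix (Fin n) (Fin n) ℂ)) :
    Continuous fun X : Matrix (Fin n) (Fin n) ℂ => nrm X := by
  classical
  set g : Matrix (Fin n) (Fin n) ℂ → ℝ := fun X =>
    ∑ i : Fin n, ∑ j : Fin n, ‖X i j‖ * nrm (Matrix.single i j 1) with hg
  have hgcont : Continuous g :=
    continuous_finset_sum _ fun i _ => continuous_finset_sum _ fun j _ =>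
      ((continuous_id.matrix_elem _ _).norm).mul continuous_const
  have hg0 : g 0 = 0 := by simp [hg]
  have hle : ∀ X, nrm X ≤ g X := by
    intro X
    have hrepr : X = ∑ i : Fin n, ∑ j : Fin n, Matrix.single i j (X i j) :=
      Matrix.matrix_eq_sum_single X
    calc nrm X = nrm (∑ i : Fin n, ∑ j : Fin n, Matrix.single i j (X i j)) := by
          rw [← hrepr]
      _ ≤ ∑ i : Fin n, nrm (∑ j : Fin n, Matrix.single i j (X i j)) :=
          Finset.le_sum_of_subadditive _ (map_zero nrm).le (map_add_le_add nrm) _ _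
      _ ≤ ∑ i : Fin n, ∑ j : Fin n, nrm (Matrix.single i j (X i j)) :=
          Finset.sum_le_sum fun i _ =>
            Finset.le_sum_of_subadditive _ (map_zero nrm).le (map_add_le_add nrm) _ _
      _ = g X := by
          refine Finset.sum_congr rfl fun i _ => Finset.sum_congr rfl fun j _ => ?_
          rw [show Matrix.single i j (X i j)
              = (X i j) • Matrix.single i j 1 by
            rw [Matrix.smul_single, smul_eq_mul, mul_one], map_smul_eq_mul]
  rw [continuous_iff_continuousAt]
  intro Y
  rw [ContinuousAt, tendsto_iff_dist_tendsto_zero]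
  have hb : ∀ X, dist (nrm X) (nrm Y) ≤ g (X - Y) := fun X => by
    rw [Real.dist_eq]
    exact (abs_sub_map_le_sub nrm X Y).trans (hle _)
  have htend : Filter.Tendsto (fun X => g (X - Y)) (nhds Y) (nhds 0) := by
    have hsub : Continuous fun X : Matrix (Fin n) (Fin n) ℂ => X - Y :=
      Continuous.sub continuous_id continuous_const
    have := (hgcont.comp hsub).tendsto Y
    simpa [hg0, Function.comp_def] using this
  exact squeeze_zero (fun X => dist_nonneg) hb htend

private lemma isOpenMap_val_GL {n : ℕ} :
    IsOpenMap (Units.val : GL (Fin n) ℂ → Matrix (Fin n) (Fin n) ℂ) := by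
  have hcont : ContinuousOn (fun M : Matrix (Fin n) (Fin n) ℂ => M⁻¹)
      {M : Matrix (Fin n) (Fin n) ℂ | IsUnit M} := by
    intro M hM
    have hdet : M.det ≠ 0 := ((Matrix.isUnit_iff_isUnit_det M).mp hM).ne_zero
    refine (continuousAt_matrix_inv M ?_).continuousWithinAt
    have : ContinuousAt (fun x : ℂ => x⁻¹) M.det := continuousAt_inv₀ hdet
    simpa [Ring.inverse_eq_inv'] using this
  have hemb : IsEmbedding (Units.val : GL (Fin n) ℂ → Matrix (Fin n) (Fin n) ℂ) :=
    Units.isEmbedding_val_mk' hcont fun u => (Matrix.coe_units_inv u).symm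
  have hopen : IsOpen {M : Matrix (Fin n) (Fin n) ℂ | IsUnit M} := by
    have h1 : {M : Matrix (Fin n) (Fin n) ℂ | IsUnit M}
        = (fun M : Matrix (Fin n) (Fin n) ℂ => M.det) ⁻¹' {x : ℂ | x ≠ 0} := by
      ext M
      simp [Matrix.isUnit_iff_isUnit_det, isUnit_iff_ne_zero]
    rw [h1]
    exact IsOpen.preimage continuous_id.matrix_det isOpen_compl_singleton
  have hrange : Set.range (Units.val : GL (Fin n) ℂ → Matrix (Fin n) (Fin n) ℂ)
      = {M : Matrix (Fin n) (Fin n) ℂ | IsUnit M} := by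
    ext M
    constructor
    · rintro ⟨u, rfl⟩; exact u.isUnit
    · intro h; exact ⟨h.unit, rfl⟩
  exact (IsOpenEmbedding.mk hemb (hrange ▸ hopen)).isOpenMap

private lemma prod_ofFn_split {G : Type*} [Monoid G] {k : ℕ} (F : Fin k → G) (i₀ : Fin k) :
    (List.ofFn F).prod
      = ((List.ofFn F).take i₀.val).prod * F i₀ * ((List.ofFn F).drop (i₀.val + 1)).prod := by
  have hlen : i₀.val < (List.ofFn F).length := by simp [i₀.isLt]
  have h1 : (List.ofFn F).prod
      = ((List.ofFn F).take (i₀.val + 1)).prod * ((List.ofFn F).drop (i₀.val + 1)).prod :=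
    (List.prod_take_mul_prod_drop _ _).symm
  have h2 : ((List.ofFn F).take (i₀.val + 1)).prod
      = ((List.ofFn F).take i₀.val).prod * (List.ofFn F).get ⟨i₀.val, hlen⟩ :=
    List.prod_take_succ _ _ _
  rw [h1, h2]
  congr 2
  simp [List.get_ofFn]

private lemma take_ofFn_eq {α : Type*} {k : ℕ} (F G : Fin k → α) (i₀ : Fin k)
    (h : ∀ j, j ≠ i₀ → F j = G j) :
    (List.ofFn F).take i₀.val = (List.ofFn G).take i₀.val := by
  apply List.ext_getElem
  · simp
  · intro m h1 h2
    simp only [List.getElem_take, List.getElem_ofFn]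
    apply h
    intro hc
    simp only [List.length_take, List.length_ofFn] at h1
    have hm : m < i₀.val := (lt_min_iff.mp h1).1
    have := congrArg Fin.val hc
    simp at this
    omega

private lemma drop_ofFn_eq {α : Type*} {k : ℕ} (F G : Fin k → α) (i₀ : Fin k)
    (h : ∀ j, j ≠ i₀ → F j = G j) :
    (List.ofFn F).drop (i₀.val + 1) = (List.ofFn G).drop (i₀.val + 1) := by
  apply List.ext_getElem
  · simp
  · intro m h1 h2
    simp only [List.getElem_drop, List.getElem_ofFn]
    apply h
    intro hc
    have := congrArg Fin.val hc
    simp at this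
    omega

theorem exists_simple_spectrum_approx_family
    {n k : ℕ} (hn : 0 < n) (hk : 0 < k)
    (f : Fin k → GL (Fin n) ℂ → GL (Fin n) ℂ)
    (hopen : ∃ i, IsOpenMap (f i))
    (A : Fin k → Matrix (Fin n) (Fin n) ℂ)
    (nrm : Seminorm ℂ (Matrix (Fin n) (Fin n) ℂ))
    (hnrm : ∀ X, nrm X = 0 → X = 0)
    (ε : ℝ) (hε : 0 < ε) :
    ∃ Aε : Fin k → GL (Fin n) ℂ,
      (∀ i, nrm (A i - (Aε i : Matrix (Fin n) (Fin n) ℂ)) < ε) ∧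
      (∀ i, ((Aε i : Matrix (Fin n) (Fin n) ℂ)).charpoly.roots.Nodup) ∧
      (((List.ofFn fun i => f i (Aε i)).prod : GL (Fin n) ℂ) :
          Matrix (Fin n) (Fin n) ℂ).charpoly.roots.Nodup := by
  classical
  obtain ⟨i₀, hio⟩ := hopen
  set S : Set (Matrix (Fin n) (Fin n) ℂ) := {M | discFn n M ≠ 0} with hS
  have hSopen : IsOpen S := by
    have h1 : S = discFn n ⁻¹' ({(0 : ℂ)}ᶜ) := rfl
    rw [h1]
    exact IsOpen.preimage (continuous_discFn hn) isOpen_compl_singleton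
  have hSdense : Dense S := dense_discFn
  have hnrmc := continuous_seminorm_matrix nrm
  set V : Fin k → Set (Matrix (Fin n) (Fin n) ℂ) := fun i => {X | nrm (A i - X) < ε} with hV
  have hVopen : ∀ i, IsOpen (V i) := by
    intro i
    have hc : Continuous fun X : Matrix (Fin n) (Fin n) ℂ => nrm (A i - X) :=
      hnrmc.comp (continuous_const.sub continuous_id)
    exact isOpen_lt hc continuous_const
  have hVmem : ∀ i, A i ∈ V i := fun i => by
    simp only [hV, Set.mem_setOf_eq, sub_self, map_zero]
    exact hε
  have hpick : ∀ i : Fin k, ∃ M ∈ S, M ∈ V i := fun i =>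
    hSdense.exists_mem_open (hVopen i) ⟨A i, hVmem i⟩
  choose B hBS hBV using hpick
  have hBunit : ∀ i, IsUnit (B i) := fun i =>
    (Matrix.isUnit_iff_isUnit_det _).mpr
      (isUnit_iff_ne_zero.mpr ((discFn_ne_iff (B i)).mp (hBS i)).1)
  set u : Fin k → GL (Fin n) ℂ := fun i => (hBunit i).unit with hu
  have hucoe : ∀ i, (u i : Matrix (Fin n) (Fin n) ℂ) = B i := fun i => (hBunit i).unit_spec
  set pre : GL (Fin n) ℂ := ((List.ofFn fun i => f i (u i)).take i₀.val).prod with hpre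
  set post : GL (Fin n) ℂ := ((List.ofFn fun i => f i (u i)).drop (i₀.val + 1)).prod with hpost
  set g : GL (Fin n) ℂ → GL (Fin n) ℂ := fun X => pre * f i₀ X * post with hgdef
  have hgopen : IsOpenMap g := by
    have h1 : IsOpenMap fun X : GL (Fin n) ℂ => pre * X := (Homeomorph.mulLeft pre).isOpenMap
    have h2 : IsOpenMap fun X : GL (Fin n) ℂ => X * post := (Homeomorph.mulRight post).isOpenMap
    have heq : g = (fun X : GL (Fin n) ℂ => X * post)
        ∘ (fun X : GL (Fin n) ℂ => pre * X) ∘ f i₀ := by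
      funext X
      simp [hgdef, Function.comp, mul_assoc]
    rw [heq]
    exact h2.comp (h1.comp hio)
  set U₀ : Set (GL (Fin n) ℂ) := (Units.val : GL (Fin n) ℂ → _) ⁻¹' (S ∩ V i₀) with hU₀
  have hU₀open : IsOpen U₀ :=
    IsOpen.preimage Units.continuous_val (hSopen.inter (hVopen i₀))
  have hmemU₀ : u i₀ ∈ U₀ := by
    simp only [hU₀, Set.mem_preimage, hucoe]
    exact ⟨hBS i₀, hBV i₀⟩
  have hWopen : IsOpen ((Units.val : GL (Fin n) ℂ → _) '' (g '' U₀)) :=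
    isOpenMap_val_GL _ (hgopen _ hU₀open)
  have hWne : ((Units.val : GL (Fin n) ℂ → _) '' (g '' U₀)).Nonempty :=
    ⟨_, ⟨g (u i₀), ⟨u i₀, hmemU₀, rfl⟩, rfl⟩⟩
  obtain ⟨Y, hYS, hYW⟩ := hSdense.exists_mem_open hWopen hWne
  obtain ⟨xg, ⟨X, hXU₀, rfl⟩, rfl⟩ := hYW
  have hXS : (X : Matrix (Fin n) (Fin n) ℂ) ∈ S := hXU₀.1
  have hXV : (X : Matrix (Fin n) (Fin n) ℂ) ∈ V i₀ := hXU₀.2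
  refine ⟨Function.update u i₀ X, ?_, ?_, ?_⟩
  · intro i
    by_cases h : i = i₀
    · subst h
      rw [Function.update_self]
      exact hXV
    · rw [Function.update_of_ne h, hucoe]
      exact hBV i
  · intro i
    by_cases h : i = i₀
    · subst h
      rw [Function.update_self]
      exact ((discFn_ne_iff _).mp hXS).2
    · rw [Function.update_of_ne h, hucoe]
      exact ((discFn_ne_iff _).mp (hBS i)).2
  · have hprod : (List.ofFn fun i => f i (Function.update u i₀ X i)).prod = g X := by
      rw [prod_ofFn_split (fun i => f i (Function.update u i₀ X i)) i₀,
        take_ofFn_eq (fun i => f i (Function.update u i₀ X i)) (fun i => f i (u i)) i₀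
          (fun j hj => by rw [Function.update_of_ne hj]),
        drop_ofFn_eq (fun i => f i (Function.update u i₀ X i)) (fun i => f i (u i)) i₀
          (fun j hj => by rw [Function.update_of_ne hj]),
        Function.update_self]
    rw [hprod]
    exact ((discFn_ne_iff _).mp hYS).2
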